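/- arXiv:1201.1573 — 2 statements merged into one kernel-verified Lean document; each statement's English description precedes it below -/
import Mathlib

section
/- Suppose Λ : [0,∞) → [0,∞) is measurable, bounded, with Λ(t) → 0 as t → ∞, and satisfies the integral inequality ∫₀^T Λ(t) dt ≤ θ + B ∫₀^T (e^{Λ(t)} − 1) dt for all T and some constants θ ≥ 0, 0 ≤ B < 1. Then ∫₀^∞ Λ(t) dt < ∞ and ∫₀^∞ (e^{Λ(t)} − 1) dt < ∞. -/
open MeasureTheory Real

/-- If `Λ : [0,∞) → [0,∞)` is measurable, bounded, tends to `0` at infinity, and satisfies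
`∫₀^T Λ ≤ θ + B ∫₀^T (e^Λ − 1)` for all `T`, with `θ ≥ 0` and `0 ≤ B < 1`, then
`∫₀^∞ Λ < ∞` and `∫₀^∞ (e^Λ − 1) < ∞`. -/
theorem integral_inequality_bootstrap (Λ : ℝ → ℝ) (θ B : ℝ)
    (hθ : 0 ≤ θ) (hB0 : 0 ≤ B) (hB1 : B < 1)
    (hmeas : Measurable Λ)
    (hnonneg : ∀ t, 0 ≤ Λ t)
    (hbdd : ∃ C : ℝ, ∀ t, Λ t ≤ C)
    (hlim : Filter.Tendsto Λ Filter.atTop (nhds 0))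
    (hineq : ∀ T : ℝ, 0 ≤ T →
      ∫ t in (0:ℝ)..T, Λ t ≤ θ + B * ∫ t in (0:ℝ)..T, (exp (Λ t) - 1)) :
    IntegrableOn Λ (Set.Ioi 0) ∧ IntegrableOn (fun t => exp (Λ t) - 1) (Set.Ioi 0) := by
  obtain ⟨C, hC⟩ := hbdd
  have hC0 : 0 ≤ C := le_trans (hnonneg 0) (hC 0)
  -- integrability on bounded intervals
  have hintΛ : ∀ a b : ℝ, IntegrableOn Λ (Set.Ioc a b) := by
    intro a b
    refine Integrable.mono'
      (show IntegrableOn (fun _ => C) (Set.Ioc a b) volume from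
        integrableOn_const measure_Ioc_lt_top.ne)
      (hmeas.aestronglyMeasurable.restrict) ?_
    filter_upwards with t
    simp only [Real.norm_eq_abs]
    rw [abs_of_nonneg (hnonneg t)]
    exact hC t
  have hintE : ∀ a b : ℝ, IntegrableOn (fun t => exp (Λ t) - 1) (Set.Ioc a b) := by
    intro a b
    refine Integrable.mono'
      (show IntegrableOn (fun _ => Real.exp C - 1) (Set.Ioc a b) volume from
        integrableOn_const measure_Ioc_lt_top.ne)
      (((Real.measurable_exp.comp hmeas).sub measurable_const).aestronglyMeasurable.restrict) ?_
    filter_upwards with t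
    simp only [Real.norm_eq_abs]
    rw [abs_of_nonneg (by have := Real.add_one_le_exp (Λ t); have := hnonneg t; linarith)]
    have := Real.exp_le_exp.2 (hC t)
    linarith
  -- pointwise bound for small values: e^x - 1 ≤ (1+δ) x
  set δ : ℝ := (1 - B) / 2 with hδdef
  have hδ0 : 0 < δ := by rw [hδdef]; linarith
  set b : ℝ := B * (1 + δ) with hbdef
  have hb1 : b < 1 := by
    have : b ≤ B + δ := by nlinarith
    simp only [hδdef] at this ⊢; linarith
  have hb0 : 0 ≤ b := mul_nonneg hB0 (by linarith)
  set ε : ℝ := min (1/2) (δ / (1 + δ)) with hεdef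
  have hε0 : 0 < ε := lt_min (by norm_num) (div_pos hδ0 (by linarith))
  have hsmall : ∀ x : ℝ, 0 ≤ x → x ≤ ε → Real.exp x - 1 ≤ (1 + δ) * x := by
    intro x hx0 hxε
    have hx2 : x ≤ 1/2 := le_trans hxε (min_le_left _ _)
    have hxδ : x ≤ δ / (1 + δ) := le_trans hxε (min_le_right _ _)
    have h1 : 1 - x ≤ Real.exp (-x) := by linarith [Real.add_one_le_exp (-x)]
    have h2 : Real.exp x * Real.exp (-x) = 1 := by
      rw [← Real.exp_add]; simp
    have hpos := Real.exp_pos x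
    have hxδ' : x * (1 + δ) ≤ δ := by
      rw [le_div_iff₀ (by positivity)] at hxδ; exact hxδ
    -- from (1-x) e^x ≤ 1 : e^x ≤ 1/(1-x) ≤ 1 + (1+δ)x  when x(1+δ) ≤ δ ... verify:
    -- (1 + (1+δ)x)(1-x) = 1 + δx - x²(1+δ) ≥ 1 when δx ≥ x²(1+δ), i.e. δ ≥ x(1+δ). ✓
    have hone : (1 - x) * Real.exp x ≤ 1 := by nlinarith [Real.add_one_le_exp (-x), Real.exp_pos (-x), h2]
    nlinarith [hone]
  -- eventually small
  have hev : ∃ T₀ : ℝ, 0 ≤ T₀ ∧ ∀ t, T₀ ≤ t → Λ t ≤ ε := by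
    have := (hlim.eventually (eventually_le_nhds hε0))
    obtain ⟨T₀, hT₀⟩ := Filter.eventually_atTop.1 this
    exact ⟨max T₀ 0, le_max_right _ _, fun t ht => hT₀ t (le_trans (le_max_left _ _) ht)⟩
  obtain ⟨T₀, hT₀0, hT₀⟩ := hev
  -- key uniform bound on ∫₀^T Λ
  set K : ℝ := θ + B * ∫ t in (0:ℝ)..T₀, (Real.exp (Λ t) - 1) with hKdef
  set M : ℝ := (∫ t in (0:ℝ)..T₀, Λ t) + K / (1 - b) with hMdef
  have hbound : ∀ T : ℝ, T₀ ≤ T → (∫ t in (0:ℝ)..T, Λ t) ≤ M := by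
    intro T hT
    have hT0 : (0:ℝ) ≤ T := le_trans hT₀0 hT
    have hsplitΛ : (∫ t in (0:ℝ)..T, Λ t)
        = (∫ t in (0:ℝ)..T₀, Λ t) + ∫ t in T₀..T, Λ t := by
      rw [intervalIntegral.integral_add_adjacent_intervals]
      · exact (intervalIntegrable_iff_integrableOn_Ioc_of_le hT₀0).2 (hintΛ 0 T₀)
      · exact (intervalIntegrable_iff_integrableOn_Ioc_of_le hT).2 (hintΛ T₀ T)
    have hsplitE : (∫ t in (0:ℝ)..T, (Real.exp (Λ t) - 1))
        = (∫ t in (0:ℝ)..T₀, (Real.exp (Λ t) - 1)) + ∫ t in T₀..T, (Real.exp (Λ t) - 1) := by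
      rw [intervalIntegral.integral_add_adjacent_intervals]
      · exact (intervalIntegrable_iff_integrableOn_Ioc_of_le hT₀0).2 (hintE 0 T₀)
      · exact (intervalIntegrable_iff_integrableOn_Ioc_of_le hT).2 (hintE T₀ T)
    -- tail comparison
    have htail : (∫ t in T₀..T, (Real.exp (Λ t) - 1)) ≤ (1 + δ) * ∫ t in T₀..T, Λ t := by
      rw [← intervalIntegral.integral_const_mul]
      apply intervalIntegral.integral_mono_on hT
        ((intervalIntegrable_iff_integrableOn_Ioc_of_le hT).2 (hintE T₀ T))
        (((intervalIntegrable_iff_integrableOn_Ioc_of_le hT).2 (hintΛ T₀ T)).const_mul _)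
      intro t ht
      exact hsmall (Λ t) (hnonneg t) (hT₀ t ht.1)
    have htailnn : 0 ≤ ∫ t in T₀..T, Λ t :=
      intervalIntegral.integral_nonneg hT (fun t _ => hnonneg t)
    have hheadnn : 0 ≤ ∫ t in (0:ℝ)..T₀, Λ t :=
      intervalIntegral.integral_nonneg hT₀0 (fun t _ => hnonneg t)
    have h1 := hineq T hT0
    rw [hsplitΛ, hsplitE] at h1
    have h2 : (∫ t in T₀..T, Λ t) ≤ K + b * ∫ t in T₀..T, Λ t := by
      have := mul_le_mul_of_nonneg_left htail hB0
      simp only [hKdef, hbdef]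
      nlinarith
    have h3 : (∫ t in T₀..T, Λ t) ≤ K / (1 - b) := by
      rw [le_div_iff₀ (by linarith)]
      nlinarith
    rw [hsplitΛ, hMdef]
    linarith
  -- integrability of Λ on Ioi 0
  have hΛint : IntegrableOn Λ (Set.Ioi 0) := by
    apply MeasureTheory.integrableOn_Ioi_of_intervalIntegral_norm_bounded
      (l := Filter.atTop) (b := id) M 0 (fun i => hintΛ 0 i) Filter.tendsto_id
    filter_upwards [Filter.eventually_ge_atTop T₀] with T hT
    have : (∫ x in (0:ℝ)..(id T), ‖Λ x‖) = ∫ x in (0:ℝ)..T, Λ x := by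
      simp only [id]
      apply intervalIntegral.integral_congr
      intro t _
      simp only [Real.norm_eq_abs]
      exact abs_of_nonneg (hnonneg t)
    rw [this]
    exact hbound T hT
  refine ⟨hΛint, ?_⟩
  refine Integrable.mono' (hΛint.const_mul (Real.exp C))
    (((Real.measurable_exp.comp hmeas).sub measurable_const).aestronglyMeasurable.restrict) ?_
  filter_upwards with t
  have h1 : (1 - Λ t) * Real.exp (Λ t) ≤ 1 := by
    have h2 : Real.exp (Λ t) * Real.exp (-(Λ t)) = 1 := by rw [← Real.exp_add]; simp
    nlinarith [Real.add_one_le_exp (-(Λ t)), Real.exp_pos (Λ t)]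
  have h3 : Real.exp (Λ t) ≤ Real.exp C := Real.exp_le_exp.2 (hC t)
  simp only [Real.norm_eq_abs]
  rw [abs_of_nonneg (by linarith [Real.add_one_le_exp (Λ t), hnonneg t])]
  nlinarith [hnonneg t, Real.exp_pos (Λ t)]
end

section
/- Suppose Λ_θ : [0,∞) → [0,∞) satisfies Λ_θ(t) = θ h(t) + B ∫₀^t (e^{Λ_θ(t−s)} − 1) h(s) ds where h ≥ 0 with ∫₀^∞ h = 1 and 0 ≤ B < 1, Λ_θ is bounded, and Λ_θ(t) → 0 as t → ∞. Then ∫₀^∞ Λ_θ(t) dt ≤ (θ + C_δ)/(1 − B(1+δ)) for suitable δ > 0 with B(1+δ) < 1, and in particular ∫₀^∞ Λ_θ(t) dt < ∞ and ∫₀^∞ (e^{Λ_θ(t)} − 1) dt < ∞. -/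
open MeasureTheory Real

private lemma exp_sub_one_le_mul_exp (x : ℝ) : exp x - 1 ≤ x * exp x := by
  have h1 : (-x) + 1 ≤ exp (-x) := Real.add_one_le_exp _
  rw [Real.exp_neg] at h1
  have h2 := Real.exp_pos x
  have h3 := mul_le_mul_of_nonneg_right h1 h2.le
  rw [inv_mul_cancel₀ h2.ne'] at h3
  nlinarith

/-- If `Λ_θ : [0,∞) → [0,∞)` is bounded, tends to `0` at infinity and satisfies the renewal-type
equation `Λ_θ(t) = θ h(t) + B ∫₀^t (e^{Λ_θ(t−s)} − 1) h(s) ds` with `h ≥ 0`, `∫₀^∞ h = 1` and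
`0 ≤ B < 1`, then for a suitable `δ > 0` with `B(1+δ) < 1` one has
`∫₀^∞ Λ_θ ≤ (θ + C_δ)/(1 − B(1+δ))`; in particular `∫₀^∞ Λ_θ < ∞` and
`∫₀^∞ (e^{Λ_θ} − 1) < ∞`. -/
theorem renewal_equation_log_mgf_integrable
    (Λ h : ℝ → ℝ) (θ B : ℝ) (hθ : 0 ≤ θ) (hB0 : 0 ≤ B) (hB1 : B < 1)
    (hmeasΛ : Measurable Λ) (hmeash : Measurable h)
    (hhnn : ∀ t, 0 ≤ h t) (hhint : IntegrableOn h (Set.Ioi 0))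
    (hnorm : ∫ t in Set.Ioi (0:ℝ), h t = 1)
    (hΛnn : ∀ t, 0 ≤ Λ t)
    (hbdd : ∃ C : ℝ, ∀ t, Λ t ≤ C)
    (hlim : Filter.Tendsto Λ Filter.atTop (nhds 0))
    (heq : ∀ t : ℝ, 0 ≤ t →
      Λ t = θ * h t + B * ∫ s in (0:ℝ)..t, (exp (Λ (t - s)) - 1) * h s) :
    ∃ δ : ℝ, 0 < δ ∧ B * (1 + δ) < 1 ∧
      ∃ C_δ : ℝ, 0 ≤ C_δ ∧
        IntegrableOn Λ (Set.Ioi 0) ∧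
        (∫ t in Set.Ioi (0:ℝ), Λ t) ≤ (θ + C_δ) / (1 - B * (1 + δ)) ∧
        IntegrableOn (fun t => exp (Λ t) - 1) (Set.Ioi 0) := by
  classical
  obtain ⟨C₀, hC₀⟩ := hbdd
  set C : ℝ := max C₀ 0 with hCdef
  have hC0 : (0:ℝ) ≤ C := le_max_right _ _
  have hΛle : ∀ t, Λ t ≤ C := fun t => (hC₀ t).trans (le_max_left _ _)
  set δ : ℝ := (1 - B) / (2 * (1 + B)) with hδdef
  have h2B : (0:ℝ) < 2 * (1 + B) := by linarith
  have hδpos : 0 < δ := div_pos (by linarith) h2B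
  have hBδ : B * (1 + δ) < 1 := by
    have hd : δ * (2 * (1 + B)) = 1 - B := div_mul_cancel₀ _ h2B.ne'
    nlinarith [sq_nonneg B, sq_nonneg (1 - B)]
  have h1δ : (0:ℝ) < 1 + δ := by linarith
  set ε : ℝ := Real.log (1 + δ) with hεdef
  have hεpos : 0 < ε := Real.log_pos (by linarith)
  have hexpε : Real.exp ε = 1 + δ := Real.exp_log h1δ
  obtain ⟨T₀, hT₀⟩ := Filter.eventually_atTop.mp (hlim.eventually_lt_const hεpos)
  set T : ℝ := max T₀ 0 with hTdef
  have hT0 : (0:ℝ) ≤ T := le_max_right _ _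
  set K : ℝ := Real.exp C - 1 with hKdef
  have hK0 : 0 ≤ K := by have := Real.one_le_exp hC0; simp only [hKdef]; linarith
  set ψ : ℝ → ℝ := fun u => (1 + δ) * Λ u + (if u < T then K else 0) with hψdef
  have hψnn : ∀ u, 0 ≤ ψ u := by
    intro u
    have h1 : 0 ≤ (1 + δ) * Λ u := mul_nonneg (by linarith) (hΛnn u)
    simp only [hψdef]
    split <;> linarith
  have hψbound : ∀ u : ℝ, 0 ≤ u → exp (Λ u) - 1 ≤ ψ u := by
    intro u _
    simp only [hψdef]
    by_cases huT : u < T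
    · rw [if_pos huT]
      have h1 : exp (Λ u) ≤ exp C := Real.exp_le_exp.mpr (hΛle u)
      have h2 : 0 ≤ (1 + δ) * Λ u := mul_nonneg (by linarith) (hΛnn u)
      simp only [hKdef]; linarith
    · rw [if_neg huT]
      push_neg at huT
      have hΛε : Λ u ≤ ε := (hT₀ u (le_trans (le_max_left _ _) huT)).le
      have hc : exp (Λ u) - 1 ≤ Λ u * exp ε :=
        (exp_sub_one_le_mul_exp (Λ u)).trans
          (mul_le_mul_of_nonneg_left (Real.exp_le_exp.mpr hΛε) (hΛnn u))
      rw [hexpε] at hc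
      linarith [hc, mul_comm (Λ u) (1 + δ)]
  have hmeasψ : Measurable ψ :=
    (measurable_const.mul hmeasΛ).add
      (Measurable.ite measurableSet_Iio measurable_const measurable_const)
  set F : ℝ → ENNReal := fun u => ENNReal.ofReal (Λ u) with hFdef
  have hmeasF : Measurable F := ENNReal.measurable_ofReal.comp hmeasΛ
  set L : ℝ → ENNReal := fun M => ∫⁻ t in Set.Ioc 0 M, F t with hLdef
  have hLfin : ∀ M : ℝ, L M ≠ ⊤ := by
    intro M
    have hle : L M ≤ ENNReal.ofReal C * volume (Set.Ioc (0:ℝ) M) := by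
      simp only [hLdef]
      calc ∫⁻ t in Set.Ioc (0:ℝ) M, F t
          ≤ ∫⁻ _ in Set.Ioc (0:ℝ) M, ENNReal.ofReal C :=
            lintegral_mono fun t => ENNReal.ofReal_le_ofReal (hΛle t)
        _ = ENNReal.ofReal C * volume (Set.Ioc (0:ℝ) M) := setLIntegral_const _ _
    refine ne_top_of_le_ne_top ?_ hle
    rw [Real.volume_Ioc]
    exact ENNReal.mul_ne_top ENNReal.ofReal_ne_top ENNReal.ofReal_ne_top
  have hhl : ∫⁻ u in Set.Ioi (0:ℝ), ENNReal.ofReal (h u) = 1 := by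
    rw [← ofReal_integral_eq_lintegral_ofReal hhint (ae_of_all _ fun u => hhnn u), hnorm,
      ENNReal.ofReal_one]
  have hhIoc : ∀ M : ℝ, ∫⁻ u in Set.Ioc (0:ℝ) M, ENNReal.ofReal (h u) ≤ 1 := fun M =>
    (lintegral_mono_set Set.Ioc_subset_Ioi_self).trans hhl.le
  -- The key renewal inequality for truncated integrals
  have key : ∀ M : ℝ, 0 ≤ M →
      L M ≤ ENNReal.ofReal θ + ENNReal.ofReal B *
        (ENNReal.ofReal (1 + δ) * L M + ENNReal.ofReal (K * T)) := by
    intro M hM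
    set W : ℝ → ℝ → ENNReal := fun t s =>
      if 0 < s ∧ s ≤ t ∧ t ≤ M then ENNReal.ofReal (ψ (t - s)) * ENNReal.ofReal (h s) else 0
      with hWdef
    have hset : MeasurableSet {p : ℝ × ℝ | 0 < p.2 ∧ p.2 ≤ p.1 ∧ p.1 ≤ M} := by
      refine MeasurableSet.inter ?_ (MeasurableSet.inter ?_ ?_)
      · exact measurableSet_lt measurable_const measurable_snd
      · exact measurableSet_le measurable_snd measurable_fst
      · exact measurableSet_le measurable_fst measurable_const
    have hWmeas : Measurable (Function.uncurry W) := by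
      have huc : Function.uncurry W = fun p : ℝ × ℝ =>
          if 0 < p.2 ∧ p.2 ≤ p.1 ∧ p.1 ≤ M then
            ENNReal.ofReal (ψ (p.1 - p.2)) * ENNReal.ofReal (h p.2) else 0 := rfl
      rw [huc]
      exact Measurable.ite hset
        ((ENNReal.measurable_ofReal.comp (hmeasψ.comp (measurable_fst.sub measurable_snd))).mul
          (ENNReal.measurable_ofReal.comp (hmeash.comp measurable_snd)))
        measurable_const
    have hpt : ∀ t ∈ Set.Ioc (0:ℝ) M,
        F t ≤ ENNReal.ofReal θ * ENNReal.ofReal (h t) + ENNReal.ofReal B * ∫⁻ s, W t s := by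
      intro t ht
      obtain ⟨ht0, htM⟩ := ht
      have hint1 : IntegrableOn (fun s => (exp (Λ (t - s)) - 1) * h s) (Set.Ioc 0 t) := by
        refine Integrable.mono'
          ((hhint.mono_set Set.Ioc_subset_Ioi_self).const_mul (Real.exp C)) ?_ ?_
        · exact (((Real.measurable_exp.comp
            (hmeasΛ.comp (measurable_const.sub measurable_id))).sub measurable_const).mul
            hmeash).aestronglyMeasurable
        · refine ae_of_all _ fun s => ?_
          have he1 : (1:ℝ) ≤ exp (Λ (t - s)) := Real.one_le_exp (hΛnn (t - s))
          rw [Real.norm_eq_abs, abs_of_nonneg (mul_nonneg (by linarith) (hhnn s))]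
          have h1 : exp (Λ (t - s)) - 1 ≤ exp C := by
            have := Real.exp_le_exp.mpr (hΛle (t - s)); linarith
          exact mul_le_mul_of_nonneg_right h1 (hhnn s)
      have hJnn : 0 ≤ᵐ[volume.restrict (Set.Ioc (0:ℝ) t)]
          fun s => (exp (Λ (t - s)) - 1) * h s :=
        ae_of_all _ fun s => mul_nonneg
          (by have := Real.one_le_exp (hΛnn (t - s)); linarith) (hhnn s)
      simp only [hFdef]
      rw [heq t ht0.le, intervalIntegral.integral_of_le ht0.le]
      calc ENNReal.ofReal (θ * h t + B * ∫ s in Set.Ioc (0:ℝ) t, (exp (Λ (t - s)) - 1) * h s)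
          ≤ ENNReal.ofReal (θ * h t) +
            ENNReal.ofReal (B * ∫ s in Set.Ioc (0:ℝ) t, (exp (Λ (t - s)) - 1) * h s) :=
            ENNReal.ofReal_add_le
        _ = ENNReal.ofReal θ * ENNReal.ofReal (h t) + ENNReal.ofReal B *
            ENNReal.ofReal (∫ s in Set.Ioc (0:ℝ) t, (exp (Λ (t - s)) - 1) * h s) := by
            rw [ENNReal.ofReal_mul hθ, ENNReal.ofReal_mul hB0]
        _ ≤ ENNReal.ofReal θ * ENNReal.ofReal (h t) + ENNReal.ofReal B * ∫⁻ s, W t s := by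
            refine add_le_add_right (mul_le_mul_right ?_ (ENNReal.ofReal B)) _
            calc ENNReal.ofReal (∫ s in Set.Ioc (0:ℝ) t, (exp (Λ (t - s)) - 1) * h s)
                = ∫⁻ s in Set.Ioc (0:ℝ) t, ENNReal.ofReal ((exp (Λ (t - s)) - 1) * h s) :=
                  ofReal_integral_eq_lintegral_ofReal hint1 hJnn
              _ ≤ ∫⁻ s in Set.Ioc (0:ℝ) t, ENNReal.ofReal (ψ (t - s) * h s) := by
                  refine lintegral_mono_ae
                    ((ae_restrict_iff' measurableSet_Ioc).mpr (ae_of_all _ fun s hs => ?_))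
                  exact ENNReal.ofReal_le_ofReal (mul_le_mul_of_nonneg_right
                    (hψbound _ (sub_nonneg.mpr hs.2)) (hhnn s))
              _ = ∫⁻ s, W t s := by
                  rw [← lintegral_indicator measurableSet_Ioc]
                  refine lintegral_congr fun s => ?_
                  by_cases hs : s ∈ Set.Ioc (0:ℝ) t
                  · rw [Set.indicator_of_mem hs]
                    simp only [hWdef]
                    rw [if_pos ⟨hs.1, hs.2, htM⟩, ENNReal.ofReal_mul (hψnn _)]
                  · rw [Set.indicator_of_notMem hs]
                    simp only [hWdef]
                    rw [if_neg]
                    rintro ⟨h1, h2, _⟩; exact hs ⟨h1, h2⟩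
    set A : ENNReal := ENNReal.ofReal (1 + δ) * L M + ENNReal.ofReal (K * T) with hAdef
    have hAne : A ≠ ⊤ := by
      simp only [hAdef]
      exact ENNReal.add_ne_top.mpr
        ⟨ENNReal.mul_ne_top ENNReal.ofReal_ne_top (hLfin M), ENNReal.ofReal_ne_top⟩
    have hs_bound : ∀ s : ℝ, ∫⁻ t, W t s ≤
        (Set.Ioc (0:ℝ) M).indicator (fun s => ENNReal.ofReal (h s) * A) s := by
      intro s
      by_cases hs : s ∈ Set.Ioc (0:ℝ) M
      · rw [Set.indicator_of_mem hs]
        have hW_eq : (fun t => W t s) = (Set.Icc s M).indicator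
            (fun t => ENNReal.ofReal (ψ (t - s)) * ENNReal.ofReal (h s)) := by
          funext t
          by_cases ht : t ∈ Set.Icc s M
          · rw [Set.indicator_of_mem ht]
            simp only [hWdef]
            rw [if_pos ⟨hs.1, ht.1, ht.2⟩]
          · rw [Set.indicator_of_notMem ht]
            simp only [hWdef]
            rw [if_neg]
            rintro ⟨_, h2, h3⟩; exact ht ⟨h2, h3⟩
        rw [hW_eq, lintegral_indicator measurableSet_Icc,
          lintegral_mul_const' _ _ ENNReal.ofReal_ne_top, mul_comm]
        refine mul_le_mul_right ?_ _
        have htrans : ∫⁻ t in Set.Icc s M, ENNReal.ofReal (ψ (t - s))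
            = ∫⁻ u in Set.Icc (0:ℝ) (M - s), ENNReal.ofReal (ψ u) := by
          rw [← lintegral_indicator measurableSet_Icc, ← lintegral_indicator measurableSet_Icc]
          have hptw : ∀ t : ℝ, (Set.Icc s M).indicator (fun t => ENNReal.ofReal (ψ (t - s))) t
              = (Set.Icc (0:ℝ) (M - s)).indicator (fun u => ENNReal.ofReal (ψ u)) (t + -s) := by
            intro t
            have hmem : t ∈ Set.Icc s M ↔ t + -s ∈ Set.Icc (0:ℝ) (M - s) := by
              simp only [Set.mem_Icc]
              constructor <;> intro hh <;> exact ⟨by linarith [hh.1], by linarith [hh.2]⟩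
            by_cases ht : t ∈ Set.Icc s M
            · rw [Set.indicator_of_mem ht, Set.indicator_of_mem (hmem.mp ht)]
              rw [sub_eq_add_neg]
            · rw [Set.indicator_of_notMem ht,
                Set.indicator_of_notMem (fun hc => ht (hmem.mpr hc))]
          calc ∫⁻ t, (Set.Icc s M).indicator (fun t => ENNReal.ofReal (ψ (t - s))) t
              = ∫⁻ t, (Set.Icc (0:ℝ) (M - s)).indicator
                  (fun u => ENNReal.ofReal (ψ u)) (t + -s) := lintegral_congr hptw
            _ = ∫⁻ u, (Set.Icc (0:ℝ) (M - s)).indicator (fun u => ENNReal.ofReal (ψ u)) u :=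
                lintegral_add_right_eq_self _ _
        have hfinal : ∫⁻ u in Set.Icc (0:ℝ) M, ENNReal.ofReal (ψ u) ≤ A := by
          have hsplit : ∀ u : ℝ, ENNReal.ofReal (ψ u)
              = ENNReal.ofReal (1 + δ) * F u + ENNReal.ofReal (if u < T then K else 0) := by
            intro u
            simp only [hψdef, hFdef]
            rw [ENNReal.ofReal_add (mul_nonneg (by linarith) (hΛnn u))
              (by split <;> simp [hK0]), ENNReal.ofReal_mul (by linarith : (0:ℝ) ≤ 1 + δ)]
          simp only [hsplit]
          rw [lintegral_add_left (show Measurable fun u : ℝ => ENNReal.ofReal (1 + δ) * F u from measurable_const.mul hmeasF),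
            lintegral_const_mul' _ _ ENNReal.ofReal_ne_top]
          have hpart1 : ∫⁻ u in Set.Icc (0:ℝ) M, F u = L M := by
            simp only [hLdef]
            rw [Measure.restrict_congr_set Ioc_ae_eq_Icc]
          have hpart2 : ∫⁻ u in Set.Icc (0:ℝ) M, ENNReal.ofReal (if u < T then K else 0)
              ≤ ENNReal.ofReal (K * T) := by
            calc ∫⁻ u in Set.Icc (0:ℝ) M, ENNReal.ofReal (if u < T then K else 0)
                ≤ ∫⁻ u in Set.Icc (0:ℝ) M,
                  (Set.Ico (0:ℝ) T).indicator (fun _ => ENNReal.ofReal K) u := by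
                  refine lintegral_mono_ae
                    ((ae_restrict_iff' measurableSet_Icc).mpr (ae_of_all _ fun u hu => ?_))
                  by_cases huT : u < T
                  · rw [if_pos huT, Set.indicator_of_mem (Set.mem_Ico.mpr ⟨hu.1, huT⟩)]
                  · rw [if_neg huT]; simp
              _ ≤ ∫⁻ u, (Set.Ico (0:ℝ) T).indicator (fun _ => ENNReal.ofReal K) u :=
                  setLIntegral_le_lintegral _ _
              _ = ENNReal.ofReal K * volume (Set.Ico (0:ℝ) T) :=
                  lintegral_indicator_const measurableSet_Ico _
              _ = ENNReal.ofReal (K * T) := by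
                  rw [Real.volume_Ico, sub_zero, ← ENNReal.ofReal_mul hK0]
          simp only [hAdef]
          rw [hpart1]
          exact add_le_add_right hpart2 _
        calc ∫⁻ t in Set.Icc s M, ENNReal.ofReal (ψ (t - s))
            = ∫⁻ u in Set.Icc (0:ℝ) (M - s), ENNReal.ofReal (ψ u) := htrans
          _ ≤ ∫⁻ u in Set.Icc (0:ℝ) M, ENNReal.ofReal (ψ u) :=
              lintegral_mono_set (Set.Icc_subset_Icc_right (by linarith [hs.1]))
          _ ≤ A := hfinal
      · rw [Set.indicator_of_notMem hs]
        have hW0 : ∀ t, W t s = 0 := by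
          intro t
          simp only [hWdef]
          rw [if_neg]
          rintro ⟨h1, h2, h3⟩; exact hs ⟨h1, h2.trans h3⟩
        simp [hW0]
    have step2 : ∫⁻ t in Set.Ioc (0:ℝ) M, ∫⁻ s, W t s ≤ A := by
      calc ∫⁻ t in Set.Ioc (0:ℝ) M, ∫⁻ s, W t s
          ≤ ∫⁻ t, ∫⁻ s, W t s := setLIntegral_le_lintegral _ _
        _ = ∫⁻ s, ∫⁻ t, W t s := lintegral_lintegral_swap hWmeas.aemeasurable
        _ ≤ ∫⁻ s, (Set.Ioc (0:ℝ) M).indicator (fun s => ENNReal.ofReal (h s) * A) s :=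
            lintegral_mono hs_bound
        _ = ∫⁻ s in Set.Ioc (0:ℝ) M, ENNReal.ofReal (h s) * A :=
            lintegral_indicator measurableSet_Ioc _
        _ = (∫⁻ s in Set.Ioc (0:ℝ) M, ENNReal.ofReal (h s)) * A :=
            lintegral_mul_const' _ _ hAne
        _ ≤ 1 * A := mul_le_mul_left (hhIoc M) _
        _ = A := one_mul _
    calc L M ≤ ∫⁻ t in Set.Ioc (0:ℝ) M,
          (ENNReal.ofReal θ * ENNReal.ofReal (h t) + ENNReal.ofReal B * ∫⁻ s, W t s) :=
          lintegral_mono_ae ((ae_restrict_iff' measurableSet_Ioc).mpr (ae_of_all _ hpt))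
      _ = ENNReal.ofReal θ * (∫⁻ t in Set.Ioc (0:ℝ) M, ENNReal.ofReal (h t))
          + ENNReal.ofReal B * ∫⁻ t in Set.Ioc (0:ℝ) M, ∫⁻ s, W t s := by
          rw [lintegral_add_left (show Measurable fun t : ℝ => ENNReal.ofReal θ * ENNReal.ofReal (h t) from measurable_const.mul (ENNReal.measurable_ofReal.comp hmeash)),
            lintegral_const_mul' _ _ ENNReal.ofReal_ne_top,
            lintegral_const_mul' _ _ ENNReal.ofReal_ne_top]
      _ ≤ ENNReal.ofReal θ * 1 + ENNReal.ofReal B * A :=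
          add_le_add (mul_le_mul_right (hhIoc M) _) (mul_le_mul_right step2 _)
      _ = ENNReal.ofReal θ + ENNReal.ofReal B * A := by rw [mul_one]
  -- Solve the renewal inequality
  set R : ℝ := (θ + B * (K * T)) / (1 - B * (1 + δ)) with hRdef
  have h1mB : 0 < 1 - B * (1 + δ) := by linarith
  have hKT0 : 0 ≤ K * T := mul_nonneg hK0 hT0
  have hR0 : 0 ≤ R := div_nonneg (by nlinarith) h1mB.le
  have hLR : ∀ M : ℝ, 0 ≤ M → L M ≤ ENNReal.ofReal R := by
    intro M hM
    have hk := key M hM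
    set x : ℝ := (L M).toReal with hxdef
    have hx0 : 0 ≤ x := ENNReal.toReal_nonneg
    have hLx : L M = ENNReal.ofReal x := (ENNReal.ofReal_toReal (hLfin M)).symm
    rw [hLx] at hk ⊢
    have hnn1 : 0 ≤ (1 + δ) * x + K * T :=
      add_nonneg (mul_nonneg (by linarith) hx0) hKT0
    have hnn2 : 0 ≤ θ + B * ((1 + δ) * x + K * T) := add_nonneg hθ (mul_nonneg hB0 hnn1)
    have hk' : ENNReal.ofReal x ≤ ENNReal.ofReal (θ + B * ((1 + δ) * x + K * T)) := by
      refine hk.trans_eq ?_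
      rw [← ENNReal.ofReal_mul (by linarith : (0:ℝ) ≤ 1 + δ),
        ← ENNReal.ofReal_add (mul_nonneg (by linarith) hx0) hKT0,
        ← ENNReal.ofReal_mul hB0, ← ENNReal.ofReal_add hθ (mul_nonneg hB0 hnn1)]
    have hxle : x ≤ θ + B * ((1 + δ) * x + K * T) :=
      (ENNReal.ofReal_le_ofReal_iff hnn2).mp hk'
    refine ENNReal.ofReal_le_ofReal ?_
    rw [hRdef, le_div_iff₀ h1mB]
    nlinarith
  -- Pass to the full half-line
  have total : ∫⁻ t in Set.Ioi (0:ℝ), F t ≤ ENNReal.ofReal R := by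
    have hU : Set.Ioi (0:ℝ) = ⋃ n : ℕ, Set.Ioc (0:ℝ) n := by
      ext x
      simp only [Set.mem_Ioi, Set.mem_iUnion, Set.mem_Ioc]
      constructor
      · intro hx; obtain ⟨n, hn⟩ := exists_nat_ge x; exact ⟨n, hx, hn⟩
      · rintro ⟨n, hn, _⟩; exact hn
    have hνs : ∀ s : Set ℝ, MeasurableSet s →
        (volume.withDensity F) s = ∫⁻ t in s, F t := fun s hs => withDensity_apply F hs
    have hmono : Monotone fun n : ℕ => Set.Ioc (0:ℝ) (n:ℝ) := fun a b hab =>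
      Set.Ioc_subset_Ioc_right (by exact_mod_cast hab)
    calc ∫⁻ t in Set.Ioi (0:ℝ), F t = (volume.withDensity F) (Set.Ioi 0) :=
        (hνs _ measurableSet_Ioi).symm
      _ = (volume.withDensity F) (⋃ n : ℕ, Set.Ioc (0:ℝ) n) := by rw [hU]
      _ = ⨆ n : ℕ, (volume.withDensity F) (Set.Ioc (0:ℝ) n) := hmono.measure_iUnion
      _ ≤ ENNReal.ofReal R := iSup_le fun n => by
          rw [hνs _ measurableSet_Ioc]; exact hLR n (Nat.cast_nonneg n)
  have hΛint : IntegrableOn Λ (Set.Ioi (0:ℝ)) := by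
    refine ⟨hmeasΛ.aestronglyMeasurable, ?_⟩
    rw [hasFiniteIntegral_iff_norm]
    have heqn : ∫⁻ t in Set.Ioi (0:ℝ), ENNReal.ofReal ‖Λ t‖ = ∫⁻ t in Set.Ioi (0:ℝ), F t :=
      lintegral_congr fun t => by
        rw [Real.norm_eq_abs, abs_of_nonneg (hΛnn t)]
    rw [heqn]
    exact lt_of_le_of_lt total ENNReal.ofReal_lt_top
  have hintval : (∫ t in Set.Ioi (0:ℝ), Λ t) ≤ R := by
    rw [integral_eq_lintegral_of_nonneg_ae (ae_of_all _ fun t => hΛnn t)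
      hmeasΛ.aestronglyMeasurable]
    exact ENNReal.toReal_le_of_le_ofReal hR0 total
  have hexpint : IntegrableOn (fun t => exp (Λ t) - 1) (Set.Ioi (0:ℝ)) := by
    refine Integrable.mono' (hΛint.const_mul (Real.exp C))
      ((Real.measurable_exp.comp hmeasΛ).sub measurable_const).aestronglyMeasurable
      (ae_of_all _ fun t => ?_)
    have he1 : (1:ℝ) ≤ exp (Λ t) := Real.one_le_exp (hΛnn t)
    rw [Real.norm_eq_abs, abs_of_nonneg (by linarith)]
    calc exp (Λ t) - 1 ≤ Λ t * exp (Λ t) := exp_sub_one_le_mul_exp _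
      _ ≤ Λ t * exp C := mul_le_mul_of_nonneg_left (Real.exp_le_exp.mpr (hΛle t)) (hΛnn t)
      _ = exp C * Λ t := mul_comm _ _
  exact ⟨δ, hδpos, hBδ, B * (K * T), mul_nonneg hB0 hKT0, hΛint, hintval, hexpint⟩
end
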